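/- arXiv:1407.4085 — 4 statements merged into one kernel-verified Lean document; each statement's English description precedes it below -/
import Mathlib

section
/- Let α = (α_0, α_1, ..., α_t) be a finite O-sequence, i.e., α_0 = 1, each α_j is a nonnegative integer, and α_{j+1} ≤ α_j^{⟨j⟩} for all j ≥ 1 (Macaulay growth bound). Then for every nonnegative integer j, (α_1 + j)·α_j ≥ (j + 1)·α_{j+1}. -/
/-- `IsMacaulayRep a d s f` says that `f s, f (s+1), ..., f d` give the `d`-th Macaulay
representation of `a`: `f d > f (d-1) > ... > f s ≥ s ≥ 1` and `a = Σ_{i=s}^{d} C(f i, i)`. -/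
def IsMacaulayRep (a d s : ℕ) (f : ℕ → ℕ) : Prop :=
  1 ≤ s ∧ s ≤ d ∧ s ≤ f s ∧ (∀ i, s ≤ i → i < d → f i < f (i + 1)) ∧
  a = ∑ i ∈ Finset.Icc s d, Nat.choose (f i) i

/-- The Macaulay growth bound `a^⟨d⟩ = Σ_{i=s}^{d} C(f i + 1, i + 1)` computed from a
Macaulay representation of `a`. -/
def macaulayBoundOf (d s : ℕ) (f : ℕ → ℕ) : ℕ :=
  ∑ i ∈ Finset.Icc s d, Nat.choose (f i + 1) (i + 1)

private lemma fmono {s d : ℕ} {f : ℕ → ℕ} (hfs : s ≤ f s)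
    (hmono : ∀ i, s ≤ i → i < d → f i < f (i + 1)) :
    ∀ i, s ≤ i → i ≤ d → i ≤ f i := by
  intro i hsi
  induction i, hsi using Nat.le_induction with
  | base => intro _; exact hfs
  | succ k hk ih =>
      intro hkd
      have h1 : k ≤ f k := ih (by omega)
      have h2 : f k < f (k + 1) := hmono k hk (by omega)
      omega

private lemma sum_choose_lt (s c e : ℕ) (f : ℕ → ℕ) (hs : 1 ≤ s) (he : e ≤ c + 1)
    (hfs : s ≤ f s) :
    ∀ d, s ≤ d → (∀ i, s ≤ i → i < d → f i < f (i + 1)) →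
      (∑ i ∈ Finset.Icc s d, (f i + c).choose (i + e)) < (f d + c + 1).choose (d + e) := by
  intro d hsd
  induction d, hsd using Nat.le_induction with
  | base =>
      intro _
      rw [Finset.Icc_self, Finset.sum_singleton]
      have hse : s + e = (s + e - 1) + 1 := by omega
      rw [hse, Nat.choose_succ_succ']
      have hpos : 0 < (f s + c).choose (s + e - 1) := Nat.choose_pos (by omega)
      omega
  | succ m hm ih =>
      intro hmono
      have hmono' : ∀ i, s ≤ i → i < m → f i < f (i + 1) := fun i h1 h2 => hmono i h1 (by omega)
      have hfm : f m < f (m + 1) := hmono m hm (by omega)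
      rw [Finset.sum_Icc_succ_top (by omega : s ≤ m + 1)]
      have h1 := ih hmono'
      have h2 : (f m + c + 1).choose (m + e) ≤ (f (m + 1) + c).choose (m + e) :=
        Nat.choose_le_choose _ (by omega)
      have h3 : (f (m + 1) + c + 1).choose (m + 1 + e) =
          (f (m + 1) + c).choose (m + e) + (f (m + 1) + c).choose (m + e + 1) := by
        rw [show m + 1 + e = (m + e) + 1 by omega, Nat.choose_succ_succ']
      have h4 : (f (m + 1) + c).choose (m + e + 1) = (f (m + 1) + c).choose (m + 1 + e) := by
        rw [show m + e + 1 = m + 1 + e by omega]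
      omega

private lemma lemD (s : ℕ) (f : ℕ → ℕ) (hs : 1 ≤ s) (hfs : s ≤ f s) :
    ∀ d, s ≤ d → (∀ i, s ≤ i → i < d → f i < f (i + 1)) → ∀ n, f d ≤ n → (s < d → f d < n) →
      (d + 1) * (∑ i ∈ Finset.Icc s d, (f i + 1).choose (i + 1)) ≤
        (n + 1) * ∑ i ∈ Finset.Icc s d, (f i).choose i := by
  intro d hsd
  induction d, hsd using Nat.le_induction with
  | base =>
      intro _ n hn _
      rw [Finset.Icc_self, Finset.sum_singleton, Finset.sum_singleton]
      have key : (f s + 1).choose (s + 1) * (s + 1) = (f s).succ * (f s).choose s :=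
        (Nat.add_one_mul_choose_eq (f s) s).symm
      calc (s + 1) * (f s + 1).choose (s + 1)
          = (f s + 1).choose (s + 1) * (s + 1) := by ring
        _ = (f s + 1) * (f s).choose s := key
        _ ≤ (n + 1) * (f s).choose s := Nat.mul_le_mul_right _ (by omega)
  | succ m hm ih =>
      intro hmono n hfn hlt
      have hfd : f (m + 1) < n := hlt (by omega)
      have hfm : f m < f (m + 1) := hmono m hm (by omega)
      have hmono' : ∀ i, s ≤ i → i < m → f i < f (i + 1) := fun i h1 h2 => hmono i h1 (by omega)
      obtain ⟨k, rfl⟩ : ∃ k, n = k + 1 := ⟨n - 1, by omega⟩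
      have hih := ih hmono' k (by omega) (fun _ => by omega)
      rw [Finset.sum_Icc_succ_top (by omega : s ≤ m + 1),
          Finset.sum_Icc_succ_top (by omega : s ≤ m + 1)]
      set r := ∑ i ∈ Finset.Icc s m, (f i).choose i with hr
      set r' := ∑ i ∈ Finset.Icc s m, (f i + 1).choose (i + 1) with hr'
      set T := (f (m + 1)).choose (m + 1) with hT
      set T' := (f (m + 1) + 1).choose (m + 1 + 1) with hT'
      have hsplit : r' = r + ∑ i ∈ Finset.Icc s m, (f i).choose (i + 1) := by
        rw [hr', hr, ← Finset.sum_add_distrib]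
        exact Finset.sum_congr rfl fun i _ => Nat.choose_succ_succ' _ _
      have hA2 : (∑ i ∈ Finset.Icc s m, (f i).choose (i + 1)) < (f m + 0 + 1).choose (m + 1) :=
        sum_choose_lt s 0 1 f hs (by omega) hfs m hm hmono'
      have hTle : (f m + 0 + 1).choose (m + 1) ≤ T :=
        Nat.choose_le_choose _ (by omega)
      have hr'le : r' ≤ r + T := by omega
      have hkey : (m + 1 + 1) * T' = (f (m + 1) + 1) * T := by
        rw [hT', hT, mul_comm]
        exact (Nat.add_one_mul_choose_eq (f (m + 1)) (m + 1)).symm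
      have h5 : (f (m + 1) + 2) * T ≤ (k + 1 + 1) * T := Nat.mul_le_mul_right _ (by omega)
      calc (m + 1 + 1) * (r' + T')
          = (m + 1) * r' + r' + (m + 1 + 1) * T' := by ring
        _ = (m + 1) * r' + r' + (f (m + 1) + 1) * T := by rw [hkey]
        _ ≤ (k + 1) * r + (r + T) + (f (m + 1) + 1) * T :=
            add_le_add (add_le_add hih hr'le) le_rfl
        _ = (k + 1 + 1) * r + (f (m + 1) + 2) * T := by ring
        _ ≤ (k + 1 + 1) * r + (k + 1 + 1) * T := add_le_add le_rfl h5
        _ = (k + 1 + 1) * (r + T) := by ring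

private lemma top_bounds {a d s n : ℕ} {f : ℕ → ℕ} (hrep : IsMacaulayRep a d s f)
    (han : a ≤ n.choose d) (hnd : d ≤ n + 1) :
    f d ≤ n ∧ (s < d → f d < n) := by
  obtain ⟨hs, hsd, hfs, hmono, hsum⟩ := hrep
  have hd : 1 ≤ d := le_trans hs hsd
  obtain ⟨e, rfl⟩ : ∃ e, d = e + 1 := ⟨d - 1, by omega⟩
  have hfd : e + 1 ≤ f (e + 1) := fmono hfs hmono (e + 1) hsd le_rfl
  have hsingle : (f (e + 1)).choose (e + 1) ≤ a := by
    rw [hsum]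
    exact Finset.single_le_sum (f := fun i => (f i).choose i) (fun i _ => Nat.zero_le _)
      (Finset.mem_Icc.mpr ⟨hsd, le_rfl⟩)
  constructor
  · by_contra h
    push_neg at h
    obtain ⟨m, hmeq⟩ : ∃ m, f (e + 1) = m + 1 := ⟨f (e + 1) - 1, by omega⟩
    have h1 : (m + 1).choose (e + 1) = m.choose e + m.choose (e + 1) :=
      Nat.choose_succ_succ' m e
    have h2 : 0 < m.choose e := Nat.choose_pos (by omega)
    have h3 : n.choose (e + 1) ≤ m.choose (e + 1) := Nat.choose_le_choose _ (by omega)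
    rw [hmeq] at hsingle
    omega
  · intro hslt
    have hsm : s ≤ e := by omega
    have hsum2 : a = (∑ i ∈ Finset.Icc s e, (f i).choose i) + (f (e + 1)).choose (e + 1) := by
      rw [hsum, Finset.sum_Icc_succ_top (by omega : s ≤ e + 1)]
    have hrpos : 0 < ∑ i ∈ Finset.Icc s e, (f i).choose i := by
      have h1 : (f s).choose s ≤ ∑ i ∈ Finset.Icc s e, (f i).choose i :=
        Finset.single_le_sum (f := fun i => (f i).choose i) (fun i _ => Nat.zero_le _)
          (Finset.mem_Icc.mpr ⟨le_rfl, hsm⟩)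
      have h2 : 0 < (f s).choose s := Nat.choose_pos hfs
      omega
    by_contra h
    push_neg at h
    have h3 : n.choose (e + 1) ≤ (f (e + 1)).choose (e + 1) := Nat.choose_le_choose _ h
    omega

private lemma lemB (α : ℕ → ℕ) (h0 : α 0 = 1)
    (hgrowth : ∀ j, 1 ≤ j →
      (α j = 0 → α (j + 1) = 0) ∧
      (1 ≤ α j → ∃ s f, IsMacaulayRep (α j) j s f ∧ α (j + 1) ≤ macaulayBoundOf j s f)) :
    ∀ j, α j ≤ (α 1 + j - 1).choose j := by
  intro j
  induction j with
  | zero => simp [h0]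
  | succ m ih =>
      rcases Nat.eq_zero_or_pos m with rfl | hm
      · simp
      · rcases Nat.eq_zero_or_pos (α m) with hz | hpos
        · have hnext := (hgrowth m hm).1 hz
          simp [hnext]
        · obtain ⟨s, f, hrep, hb⟩ := (hgrowth m hm).2 hpos
          set n := α 1 + m - 1 with hn
          have hn1 : α 1 + (m + 1) - 1 = n + 1 := by omega
          have htop := top_bounds hrep ih (by omega)
          obtain ⟨hs, hsd, hfs, hmono, hsum⟩ := hrep
          rw [hn1]
          rcases eq_or_lt_of_le hsd with heq | hslt
          · have hbnd : macaulayBoundOf m s f = (f m + 1).choose (m + 1) := by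
              rw [macaulayBoundOf, ← heq, Finset.Icc_self, Finset.sum_singleton]
            have : (f m + 1).choose (m + 1) ≤ (n + 1).choose (m + 1) :=
              Nat.choose_le_choose _ (by have := htop.1; omega)
            omega
          · have hflt : f m < n := htop.2 hslt
            have hbnd : macaulayBoundOf m s f < (f m + 1 + 1).choose (m + 1) :=
              sum_choose_lt s 1 1 f hs (by omega) hfs m hsd hmono
            have hle : (f m + 1 + 1).choose (m + 1) ≤ (n + 1).choose (m + 1) :=
              Nat.choose_le_choose _ (by omega)
            omega

theorem oseq_halfspaces (α : ℕ → ℕ) (h0 : α 0 = 1)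
    (hgrowth : ∀ j, 1 ≤ j →
      (α j = 0 → α (j + 1) = 0) ∧
      (1 ≤ α j → ∃ s f, IsMacaulayRep (α j) j s f ∧ α (j + 1) ≤ macaulayBoundOf j s f)) :
    ∀ j, (j + 1) * α (j + 1) ≤ (α 1 + j) * α j := by
  intro j
  rcases Nat.eq_zero_or_pos j with rfl | hj
  · simp [h0]
  · rcases Nat.eq_zero_or_pos (α j) with hz | hpos
    · have h1 := (hgrowth j hj).1 hz
      simp [h1]
    · obtain ⟨s, f, hrep, hb⟩ := (hgrowth j hj).2 hpos
      have hBj := lemB α h0 hgrowth j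
      set n := α 1 + j - 1 with hn
      have htop := top_bounds hrep hBj (by omega)
      obtain ⟨hs, hsd, hfs, hmono, hsum⟩ := hrep
      have hD := lemD s f hs hfs j hsd hmono n htop.1 htop.2
      have hchain : (j + 1) * α (j + 1) ≤ (j + 1) * macaulayBoundOf j s f :=
        Nat.mul_le_mul_left _ hb
      have hEq : α 1 + j = n + 1 := by omega
      rw [hEq, hsum]
      have hbd : macaulayBoundOf j s f = ∑ i ∈ Finset.Icc s j, (f i + 1).choose (i + 1) := rfl
      rw [hbd] at hchain
      exact le_trans hchain hD
end

section
/- Let d_0 < d_1 < ... < d_t be integers and let α_1, ..., α_t be rationals, with α_{t+1} := 0. Fix 1 ≤ i ≤ t. Then Σ_{j=i}^{t} [ ((d_j − d_0)·α_j − α_{j+1}) · (−1)^i / Π_{k=0, k≠i}^{j} (d_k − d_i) ] = Σ_{j=i}^{t} α_j · (−1)^{i-1} / Π_{k=1, k≠i}^{j} (d_k − d_i). -/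
open Finset

private lemma ext_mono_seg (d : ℕ → ℤ) (n : ℕ) (h : ∀ k, k < n → d k < d (k + 1)) :
    ∀ a b, a < b → b ≤ n → d a < d b := by
  intro a b hab hbn
  induction b with
  | zero => omega
  | succ m ih =>
    rcases Nat.lt_or_ge a m with h1 | h1
    · exact lt_trans (ih h1 (by omega)) (h m (by omega))
    · have : a = m := by omega
      subst this; exact h a (by omega)

private lemma ext_prod_split (i j : ℕ) (hi : 1 ≤ i) (f : ℕ → ℚ) :
    ∏ k ∈ (Icc 0 j).erase i, f k = f 0 * ∏ k ∈ (Icc 1 j).erase i, f k := by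
  have hset : (Icc 0 j).erase i = insert 0 ((Icc 1 j).erase i) := by
    ext k; simp only [mem_erase, mem_Icc, mem_insert]; omega
  rw [hset, prod_insert (by simp only [mem_erase, mem_Icc]; omega)]

private lemma ext_P_ne_zero (d : ℕ → ℤ) (i n j : ℕ) (hj : j ≤ n) (hin : i ≤ n)
    (h : ∀ k, k < n → d k < d (k + 1)) :
    ∏ k ∈ (Icc 1 j).erase i, ((d k : ℚ) - (d i : ℚ)) ≠ 0 := by
  rw [Finset.prod_ne_zero_iff]
  intro k hk
  simp only [mem_erase, mem_Icc] at hk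
  have hne : d k ≠ d i := by
    rcases Nat.lt_or_ge k i with h1 | h1
    · exact ne_of_lt (ext_mono_seg d n h k i h1 hin)
    · have : i < k := by omega
      exact (ne_of_lt (ext_mono_seg d n h i k this (by omega))).symm
  intro hc
  exact hne (by exact_mod_cast sub_eq_zero.mp hc)

private lemma ext_base_id (P x0 xi a b s : ℚ) (hP : P ≠ 0) (h0 : x0 - xi ≠ 0) :
    ((xi - x0) * a - b) * -s / ((x0 - xi) * P) = a * s / P - b * s / ((xi - x0) * P) := by
  have h0' : xi - x0 ≠ 0 := by intro h; apply h0; linarith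
  field_simp
  ring

private lemma ext_step_id (P x0 xi xn a b s : ℚ) (hP : P ≠ 0) (h0 : x0 - xi ≠ 0)
    (hn : xn - xi ≠ 0) :
    ((xn - x0) * a - b) * -s / ((x0 - xi) * (P * (xn - xi)))
      = a * s / (P * (xn - xi))
        + (a * s / ((xi - x0) * P) - b * s / ((xi - x0) * (P * (xn - xi)))) := by
  have h0' : xi - x0 ≠ 0 := by intro h; apply h0; linarith
  field_simp
  ring

private lemma ext_aux (d : ℕ → ℤ) (α : ℕ → ℚ) (i : ℕ) (hi1 : 1 ≤ i) :
    ∀ t, i ≤ t → (∀ k, k < t → d k < d (k + 1)) →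
    ∑ j ∈ Icc i t,
      (((d j : ℚ) - (d 0 : ℚ)) * α j - α (j + 1)) * (-1 : ℚ) ^ i
        / ∏ k ∈ (Icc 0 j).erase i, ((d k : ℚ) - (d i : ℚ))
    = (∑ j ∈ Icc i t,
        α j * (-1 : ℚ) ^ (i - 1)
          / ∏ k ∈ (Icc 1 j).erase i, ((d k : ℚ) - (d i : ℚ)))
      - α (t + 1) * (-1 : ℚ) ^ (i - 1)
          / (((d i : ℚ) - (d 0 : ℚ)) *
             ∏ k ∈ (Icc 1 t).erase i, ((d k : ℚ) - (d i : ℚ))) := by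
  intro t
  induction t with
  | zero => intro hit; omega
  | succ n ih =>
    intro hit hmono
    obtain ⟨m, rfl⟩ : ∃ m, i = m + 1 := ⟨i - 1, by omega⟩
    have h0i : ((d 0 : ℚ) - d (m + 1)) ≠ 0 := by
      have : d 0 < d (m + 1) := ext_mono_seg d (n + 1) hmono 0 (m + 1) (by omega) (by omega)
      intro hc
      exact absurd (show d 0 = d (m + 1) by exact_mod_cast sub_eq_zero.mp hc) (ne_of_lt this)
    rcases Nat.lt_or_ge n (m + 1) with hcase | hcase
    · -- base case: n = m
      have hn : m = n := by omega
      subst hn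
      have hP : ∏ k ∈ (Icc 1 (m + 1)).erase (m + 1), ((d k : ℚ) - d (m + 1)) ≠ 0 :=
        ext_P_ne_zero d (m + 1) (m + 1) (m + 1) le_rfl le_rfl hmono
      rw [Icc_self, sum_singleton, sum_singleton,
        ext_prod_split (m + 1) (m + 1) (by omega)]
      have hpow : (-1 : ℚ) ^ (m + 1) = -(-1 : ℚ) ^ m := by ring
      have hsub : (m + 1) - 1 = m := by omega
      rw [hpow, hsub]
      exact ext_base_id _ _ _ _ _ _ hP h0i
    · -- inductive step: m + 1 ≤ n
      have hmono' : ∀ k, k < n → d k < d (k + 1) := fun k hk => hmono k (by omega)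
      have ihn := ih hcase hmono'
      have hPn : ∏ k ∈ (Icc 1 n).erase (m + 1), ((d k : ℚ) - d (m + 1)) ≠ 0 :=
        ext_P_ne_zero d (m + 1) (n + 1) n (by omega) (by omega) hmono
      have hnew : ((d (n + 1) : ℚ) - d (m + 1)) ≠ 0 := by
        have : d (m + 1) < d (n + 1) :=
          ext_mono_seg d (n + 1) hmono (m + 1) (n + 1) (by omega) le_rfl
        intro hc
        exact absurd (show d (n + 1) = d (m + 1) by exact_mod_cast sub_eq_zero.mp hc)
          (ne_of_gt this)
      have hstep : ∏ k ∈ (Icc 1 (n + 1)).erase (m + 1), ((d k : ℚ) - d (m + 1))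
          = (∏ k ∈ (Icc 1 n).erase (m + 1), ((d k : ℚ) - d (m + 1)))
            * ((d (n + 1) : ℚ) - d (m + 1)) := by
        have hset : (Icc 1 (n + 1)).erase (m + 1)
            = insert (n + 1) ((Icc 1 n).erase (m + 1)) := by
          ext k; simp only [mem_erase, mem_Icc, mem_insert]; omega
        rw [hset, prod_insert (by simp only [mem_erase, mem_Icc]; omega), mul_comm]
      have hpow : (-1 : ℚ) ^ (m + 1) = -(-1 : ℚ) ^ m := by ring
      have hsub : (m + 1) - 1 = m := by omega
      rw [sum_Icc_succ_top (by omega : m + 1 ≤ n + 1),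
        sum_Icc_succ_top (by omega : m + 1 ≤ n + 1), ihn,
        ext_prod_split (m + 1) (n + 1) (by omega), hstep, hpow, hsub]
      have key := ext_step_id (∏ k ∈ (Icc 1 n).erase (m + 1), ((d k : ℚ) - d (m + 1)))
        ((d 0 : ℚ)) ((d (m + 1) : ℚ)) ((d (n + 1) : ℚ))
        (α (n + 1)) (α (n + 1 + 1)) ((-1 : ℚ) ^ m) hPn h0i hnew
      linarith [key]

theorem extension_lemma_entry_identity (t : ℕ) (d : ℕ → ℤ)
    (hmono : ∀ k, k < t → d k < d (k + 1))
    (α : ℕ → ℚ) (htop : α (t + 1) = 0)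
    (i : ℕ) (hi1 : 1 ≤ i) (hit : i ≤ t) :
    ∑ j ∈ Finset.Icc i t,
      (((d j : ℚ) - (d 0 : ℚ)) * α j - α (j + 1)) * (-1 : ℚ) ^ i
        / ∏ k ∈ (Finset.Icc 0 j).erase i, ((d k : ℚ) - (d i : ℚ))
    = ∑ j ∈ Finset.Icc i t,
        α j * (-1 : ℚ) ^ (i - 1)
          / ∏ k ∈ (Finset.Icc 1 j).erase i, ((d k : ℚ) - (d i : ℚ)) := by
  rw [ext_aux d α i hi1 t hit hmono, htop]
  simp
end

section
/- Let d ≥ 1, t ≥ 0, and let α = (α_0, ..., α_t) be a sequence of nonnegative rationals with α_j := 0 for j > t, satisfying (d + j)·α_j ≥ (j + 1)·α_{j+1} for all j ≥ 0. Then α is a nonnegative rational linear combination of the sequences h^{(j)} (0 ≤ j ≤ t), where h^{(j)}_k = C(d+k−1, k) for k ≤ j and 0 for k > j. Conversely, every nonnegative linear combination of the h^{(j)} satisfies all the inequalities (d + j)·α_j ≥ (j + 1)·α_{j+1}. -/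
/-- The truncated Hilbert-function sequence of `K[x_1,...,x_d]/m^{j+1}`. -/
def hseq (d j k : ℕ) : ℚ := if k ≤ j then (Nat.choose (d + k - 1) k : ℚ) else 0

lemma bpos (d k : ℕ) (hd : 1 ≤ d) : (0:ℚ) < (Nat.choose (d + k - 1) k : ℚ) := by
  have : k ≤ d + k - 1 := by omega
  exact_mod_cast Nat.choose_pos this

lemma keyid (d j : ℕ) (hd : 1 ≤ d) :
    ((d:ℚ) + j) * (Nat.choose (d + j - 1) j : ℚ)
      = ((j:ℚ) + 1) * (Nat.choose (d + (j+1) - 1) (j+1) : ℚ) := by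
  have h := Nat.add_one_mul_choose_eq (d + j - 1) j
  have h1 : d + j - 1 + 1 = d + j := by omega
  have h2 : d + (j+1) - 1 = d + j := by omega
  rw [h1] at h
  rw [h2]
  have hn : (d + j) * Nat.choose (d + j - 1) j = (j + 1) * Nat.choose (d + j) (j + 1) := by
    rw [h, Nat.mul_comm]
  exact_mod_cast hn

lemma pw (d i j : ℕ) (hd : 1 ≤ d) :
    ((j:ℚ) + 1) * hseq d i (j+1) ≤ ((d:ℚ) + j) * hseq d i j := by
  unfold hseq
  by_cases h : j + 1 ≤ i
  · have hj : j ≤ i := by omega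
    rw [if_pos h, if_pos hj, ← keyid d j hd]
  · rw [if_neg h, mul_zero]
    have hdj : (0:ℚ) ≤ (d:ℚ) + j := by positivity
    split
    · exact mul_nonneg hdj (by positivity)
    · simp

theorem cone_of_oseqs (d t : ℕ) (hd : 1 ≤ d) :
    (∀ α : ℕ → ℚ, (∀ j, 0 ≤ α j) → (∀ j, t < j → α j = 0) →
      (∀ j : ℕ, ((j : ℚ) + 1) * α (j + 1) ≤ ((d : ℚ) + j) * α j) →
      ∃ c : ℕ → ℚ, (∀ j, 0 ≤ c j) ∧
        ∀ k, α k = ∑ j ∈ Finset.range (t + 1), c j * hseq d j k) ∧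
    (∀ c : ℕ → ℚ, (∀ j, 0 ≤ c j) →
      ∀ j : ℕ, ((j : ℚ) + 1) * (∑ i ∈ Finset.range (t + 1), c i * hseq d i (j + 1))
        ≤ ((d : ℚ) + j) * (∑ i ∈ Finset.range (t + 1), c i * hseq d i j)) := by
  constructor
  · intro α hα0 hαt hineq
    set b : ℕ → ℚ := fun k => (Nat.choose (d + k - 1) k : ℚ) with hb
    set g : ℕ → ℚ := fun j => α j / b j with hg
    refine ⟨fun j => g j - g (j+1), ?_, ?_⟩
    · intro j
      have hbj := bpos d j hd
      have hbj1 := bpos d (j+1) hd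
      have hkey := keyid d j hd
      have h := hineq j
      simp only [hg, hb, sub_nonneg]
      rw [div_le_div_iff₀ hbj1 hbj]
      nlinarith [hα0 j, hα0 (j+1)]
    · intro k
      by_cases hk : k ≤ t
      · have hsub : Finset.Ico k (t+1) ⊆ Finset.range (t+1) := by
          intro x hx
          simp only [Finset.mem_Ico] at hx
          simp [hx.2]
        rw [← Finset.sum_subset hsub (by
          intro x hx hx'
          simp only [Finset.mem_range] at hx
          simp only [Finset.mem_Ico, not_and, not_le] at hx'
          have : ¬ k ≤ x := by omega
          simp [hseq, this])]
        have heq : ∀ x ∈ Finset.Ico k (t+1),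
            (g x - g (x+1)) * hseq d x k = (g x - g (x+1)) * b k := by
          intro x hx
          simp only [Finset.mem_Ico] at hx
          simp [hseq, hx.1, hb]
        rw [Finset.sum_congr rfl heq, ← Finset.sum_mul]
        have htel : ∑ x ∈ Finset.Ico k (t+1), (g x - g (x+1)) = g k - g (t+1) := by
          rw [Finset.sum_Ico_eq_sum_range]
          have := Finset.sum_range_sub' (fun i => g (k + i)) (t + 1 - k)
          simp only [Nat.add_zero] at this
          rw [show (fun i => g (k+i) - g (k+i+1)) = fun i => (fun i => g (k+i)) i - (fun i => g (k+i)) (i+1) by funext i; ring_nf] at *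
          rw [this]
          congr 2
          omega
        rw [htel]
        have hgt1 : g (t+1) = 0 := by
          simp [hg, hαt (t+1) (by omega)]
        rw [hgt1, sub_zero, hg]
        field_simp [ne_of_gt (bpos d k hd)]
        exact (mul_div_cancel_right₀ _ (ne_of_gt (bpos d k hd))).symm
      · rw [hαt k (by omega)]
        rw [Finset.sum_eq_zero]
        intro x hx
        simp only [Finset.mem_range] at hx
        have : ¬ k ≤ x := by omega
        simp [hseq, this]
  · intro c hc j
    rw [Finset.mul_sum, Finset.mul_sum]
    apply Finset.sum_le_sum
    intro i _
    have := pw d i j hd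
    calc ((j:ℚ)+1) * (c i * hseq d i (j+1)) = c i * (((j:ℚ)+1) * hseq d i (j+1)) := by ring
      _ ≤ c i * (((d:ℚ)+j) * hseq d i j) := mul_le_mul_of_nonneg_left this (hc i)
      _ = ((d:ℚ)+j) * (c i * hseq d i j) := by ring
end

section
/- Let a ≥ 1 and j ≥ 1 be integers and write the j-th Macaulay representation a = C(a_j, j) + ... + C(a_s, s) with a_j > ... > a_s ≥ s ≥ 1. If b ≤ a^{⟨j⟩} := C(a_j+1, j+1) + ... + C(a_s+1, s+1), then (a_1' + j)·a ≥ (j+1)·b where a_1' is any integer satisfying a ≤ C(a_1' + j − 1, j); in particular, taking d with a ≤ C(d+j−1, j), one has (d + j)·a ≥ (j + 1)·a^{⟨j⟩}. -/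
lemma rep_f_ge {j s : ℕ} {f : ℕ → ℕ} (hs : s ≤ f s)
    (hchain : ∀ i, s ≤ i → i < j → f i < f (i + 1)) :
    ∀ i, s ≤ i → i ≤ j → i ≤ f i := by
  intro i hsi
  induction i, hsi using Nat.le_induction with
  | base => intro _; exact hs
  | succ n hn ih =>
    intro h
    have h1 := hchain n hn (by omega)
    have h2 := ih (by omega)
    omega

/-- Restriction of a Macaulay rep to the lower part. -/
lemma rep_restrict {a j s : ℕ} {f : ℕ → ℕ} (h : IsMacaulayRep a (j + 1) s f)
    (hs : s ≤ j) : IsMacaulayRep (∑ i ∈ Finset.Icc s j, Nat.choose (f i) i) j s f := by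
  obtain ⟨h1, h2, h3, h4, h5⟩ := h
  exact ⟨h1, hs, h3, fun i hi hij => h4 i hi (by omega), rfl⟩

/-- Pascal's rule in `+1` form. -/
lemma choose_pascal (n k : ℕ) :
    Nat.choose (n + 1) (k + 1) = Nat.choose n k + Nat.choose n (k + 1) := by
  have h := Nat.choose_succ_succ n k
  simpa [Nat.succ_eq_add_one] using h

/-- A number is strictly less than `C(f j + 1, j)` given its `j`-th Macaulay rep. -/
lemma rep_lt : ∀ j, ∀ s f a, IsMacaulayRep a j s f → a < Nat.choose (f j + 1) j := by
  intro j
  induction j with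
  | zero => intro s f a h; obtain ⟨x1, x2, -⟩ := h; omega
  | succ k ih =>
    intro s f a h
    obtain ⟨h1, h2, h3, h4, h5⟩ := h
    have hfj : k + 1 ≤ f (k + 1) := rep_f_ge h3 h4 (k + 1) h2 le_rfl
    have hpas := choose_pascal (f (k + 1)) k
    have hpos : 0 < Nat.choose (f (k + 1)) k := Nat.choose_pos (by omega)
    rcases eq_or_lt_of_le h2 with heq | hlt
    · -- s = k + 1 : single term
      subst heq
      rw [h5, Finset.Icc_self, Finset.sum_singleton]
      omega
    · -- s ≤ k
      have hsk : s ≤ k := by omega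
      have hrep' := rep_restrict ⟨h1, h2, h3, h4, h5⟩ hsk
      have ha' := ih s f _ hrep'
      have hfk : f k + 1 ≤ f (k + 1) := by
        have := h4 k hsk (by omega)
        omega
      have hle : Nat.choose (f k + 1) k ≤ Nat.choose (f (k + 1)) k :=
        Nat.choose_le_choose k hfk
      rw [h5, Finset.sum_Icc_succ_top (by omega)]
      omega

/-- Sum of the shifted-denominator binomials is small. -/
lemma rep_shift_lt : ∀ j, ∀ s f a, IsMacaulayRep a j s f →
    (∑ i ∈ Finset.Icc s j, Nat.choose (f i) (i + 1)) < Nat.choose (f j + 1) (j + 1) := by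
  intro j
  induction j with
  | zero => intro s f a h; obtain ⟨x1, x2, -⟩ := h; omega
  | succ k ih =>
    intro s f a h
    obtain ⟨h1, h2, h3, h4, h5⟩ := h
    have hfj : k + 1 ≤ f (k + 1) := rep_f_ge h3 h4 (k + 1) h2 le_rfl
    have hpas := choose_pascal (f (k + 1)) (k + 1)
    have hpos : 0 < Nat.choose (f (k + 1)) (k + 1) := Nat.choose_pos hfj
    rcases eq_or_lt_of_le h2 with heq | hlt
    · subst heq
      rw [Finset.Icc_self, Finset.sum_singleton]
      omega
    · have hsk : s ≤ k := by omega
      have hrep' := rep_restrict ⟨h1, h2, h3, h4, h5⟩ hsk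
      have ha' := ih s f _ hrep'
      have hfk : f k + 1 ≤ f (k + 1) := by
        have := h4 k hsk (by omega)
        omega
      have hle : Nat.choose (f k + 1) (k + 1) ≤ Nat.choose (f (k + 1)) (k + 1) :=
        Nat.choose_le_choose (k + 1) hfk
      rw [Finset.sum_Icc_succ_top (by omega)]
      omega

/-- The absorption identity in `+1` form:
`(k+1) * C(n+1, k+1) = (n+1) * C(n, k)`. -/
lemma choose_absorb (n k : ℕ) :
    (k + 1) * Nat.choose (n + 1) (k + 1) = (n + 1) * Nat.choose n k := by
  have h := Nat.add_one_mul_choose_eq n k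
  rw [mul_comm]
  exact h.symm

/-- The key numerical lemma: `(j+1) · a^⟨j⟩ ≤ (m+1) · a` whenever `a ≤ C(m, j)`. -/
lemma macaulay_key : ∀ j, ∀ s f a m, IsMacaulayRep a j s f → a ≤ Nat.choose m j →
    (j + 1) * macaulayBoundOf j s f ≤ (m + 1) * a := by
  intro j
  induction j with
  | zero => intro s f a m h; obtain ⟨x1, x2, -⟩ := h; exact absurd x2 (by omega)
  | succ k ih =>
    intro s f a m h hm
    obtain ⟨h1, h2, h3, h4, h5⟩ := h
    have hfj : k + 1 ≤ f (k + 1) := rep_f_ge h3 h4 (k + 1) h2 le_rfl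
    -- a ≥ 1
    have hapos : 1 ≤ a := by
      rw [h5]
      calc 1 ≤ Nat.choose (f s) s := Nat.choose_pos h3
        _ ≤ ∑ i ∈ Finset.Icc s (k + 1), Nat.choose (f i) i :=
            Finset.single_le_sum (f := fun i => Nat.choose (f i) i)
              (fun i _ => Nat.zero_le _) (Finset.mem_Icc.mpr ⟨le_rfl, h2⟩)
    -- m ≥ k + 1
    have hmk : k + 1 ≤ m := by
      by_contra hc
      have hz : Nat.choose m (k + 1) = 0 := Nat.choose_eq_zero_of_lt (by omega)
      omega
    rcases eq_or_lt_of_le h2 with heq | hlt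
    · -- single term: a = C(f (k+1), k+1)
      subst heq
      have ha : a = Nat.choose (f (k + 1)) (k + 1) := by
        rw [h5, Finset.Icc_self, Finset.sum_singleton]
      have hbd : macaulayBoundOf (k + 1) (k + 1) f
          = Nat.choose (f (k + 1) + 1) (k + 1 + 1) := by
        simp [macaulayBoundOf]
      -- f (k+1) ≤ m
      have hfsm : f (k + 1) ≤ m := by
        by_contra hc
        push_neg at hc
        have h1' : Nat.choose (m + 1) (k + 1) ≤ Nat.choose (f (k + 1)) (k + 1) :=
          Nat.choose_le_choose (k + 1) (by omega)
        have hpas := choose_pascal m k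
        have hpos : 0 < Nat.choose m k := Nat.choose_pos (by omega)
        omega
      rw [hbd, ha]
      calc (k + 1 + 1) * Nat.choose (f (k + 1) + 1) (k + 1 + 1)
          = (f (k + 1) + 1) * Nat.choose (f (k + 1)) (k + 1) :=
            choose_absorb (f (k + 1)) (k + 1)
        _ ≤ (m + 1) * Nat.choose (f (k + 1)) (k + 1) :=
            Nat.mul_le_mul_right _ (by omega)
    · -- s ≤ k : split off the top term
      have hsk : s ≤ k := by omega
      set a' := ∑ i ∈ Finset.Icc s k, Nat.choose (f i) i with ha'def
      have hrep' : IsMacaulayRep a' k s f := rep_restrict ⟨h1, h2, h3, h4, h5⟩ hsk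
      have ha : a = a' + Nat.choose (f (k + 1)) (k + 1) := by
        rw [h5, Finset.sum_Icc_succ_top (by omega)]
      have ha'pos : 1 ≤ a' := by
        calc 1 ≤ Nat.choose (f s) s := Nat.choose_pos h3
          _ ≤ ∑ i ∈ Finset.Icc s k, Nat.choose (f i) i :=
              Finset.single_le_sum (f := fun i => Nat.choose (f i) i)
                (fun i _ => Nat.zero_le _) (Finset.mem_Icc.mpr ⟨le_rfl, hsk⟩)
      -- f (k+1) < m
      have hfjm : f (k + 1) + 1 ≤ m := by
        by_contra hc
        push_neg at hc
        have h1' : Nat.choose m (k + 1) ≤ Nat.choose (f (k + 1)) (k + 1) :=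
          Nat.choose_le_choose (k + 1) (by omega)
        omega
      have hfk : f k + 1 ≤ f (k + 1) := by
        have := h4 k hsk (by omega)
        omega
      obtain ⟨m', rfl⟩ : ∃ m', m = m' + 1 := ⟨m - 1, by omega⟩
      -- a' ≤ C(m', k)
      have ha'lt : a' < Nat.choose (f k + 1) k := rep_lt k s f a' hrep'
      have ha'm : a' ≤ Nat.choose m' k := by
        have : Nat.choose (f k + 1) k ≤ Nat.choose m' k :=
          Nat.choose_le_choose k (by omega)
        omega
      have hIH := ih s f a' m' hrep' ha'm
      -- bound decomposition
      set b' := macaulayBoundOf k s f with hb'def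
      have hbd : macaulayBoundOf (k + 1) s f
          = b' + Nat.choose (f (k + 1) + 1) (k + 1 + 1) := by
        simp only [hb'def, macaulayBoundOf]
        rw [Finset.sum_Icc_succ_top (by omega)]
      -- b' = a' + Σ C(f i, i+1)
      have hsplit : b' = a' + ∑ i ∈ Finset.Icc s k, Nat.choose (f i) (i + 1) := by
        simp only [hb'def, macaulayBoundOf, ha'def, ← Finset.sum_add_distrib]
        exact Finset.sum_congr rfl fun i _ => choose_pascal (f i) i
      have hshift : (∑ i ∈ Finset.Icc s k, Nat.choose (f i) (i + 1)) <
          Nat.choose (f k + 1) (k + 1) := rep_shift_lt k s f a' hrep'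
      have hb'le : b' ≤ a' + Nat.choose (f (k + 1)) (k + 1) := by
        have : Nat.choose (f k + 1) (k + 1) ≤ Nat.choose (f (k + 1)) (k + 1) :=
          Nat.choose_le_choose (k + 1) hfk
        omega
      rw [hbd, ha]
      set X := Nat.choose (f (k + 1)) (k + 1) with hX
      have htop : (k + 1 + 1) * Nat.choose (f (k + 1) + 1) (k + 1 + 1) ≤ (m' + 1) * X := by
        rw [choose_absorb (f (k + 1)) (k + 1)]
        exact Nat.mul_le_mul_right _ (by omega)
      calc (k + 1 + 1) * (b' + Nat.choose (f (k + 1) + 1) (k + 1 + 1))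
          = (k + 1) * b' + b' + (k + 1 + 1) * Nat.choose (f (k + 1) + 1) (k + 1 + 1) := by
            ring
        _ ≤ (m' + 1) * a' + (a' + X) + (m' + 1) * X :=
            add_le_add (add_le_add hIH hb'le) htop
        _ = (m' + 1 + 1) * (a' + X) := by ring

theorem macaulay_growth_linear_bound (a j : ℕ) (ha : 1 ≤ a) (hj : 1 ≤ j)
    (s : ℕ) (f : ℕ → ℕ) (hrep : IsMacaulayRep a j s f)
    (b : ℕ) (hb : b ≤ macaulayBoundOf j s f) :
    ∀ d : ℕ, a ≤ Nat.choose (d + j - 1) j → (j + 1) * b ≤ (d + j) * a := by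
  intro d hd
  rcases Nat.eq_zero_or_pos d with rfl | hd1
  · have hz : Nat.choose (0 + j - 1) j = 0 := Nat.choose_eq_zero_of_lt (by omega)
    omega
  · have hkey := macaulay_key j s f a (d + j - 1) hrep hd
    have heq : d + j - 1 + 1 = d + j := by omega
    rw [heq] at hkey
    calc (j + 1) * b ≤ (j + 1) * macaulayBoundOf j s f := Nat.mul_le_mul_left _ hb
      _ ≤ (d + j) * a := hkey
end
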